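/- In the web model, let λ ∈ ℝ and let ξ : 𝒜 → ℂ satisfy Lξ = λξ. Suppose that for each σ ∈ 𝒞 there are a complex number x_σ, a sequence e_σ : ℕ → ℂ, and a real number c_σ ≥ 0 such that ξ(σ(k)) = x_σ·e_σ(k) for all k ≥ 0 and 𝔟_σ(0)·(e_σ(0)·ē_σ(1) − e_σ(1)·ē_σ(0)) = i·c_σ. Then c_σ·|x_σ|² = 0 for every σ ∈ 𝒞; in particular x_σ = 0 for every σ with c_σ > 0. -/

import Mathlib

open Complex

/-- Points of the web: the central part `A1` plus, for each channel `σ ∈ C`, the chain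
`σ(1), σ(2), …` (encoded as `Sum.inr (σ, k)` for `σ(k+1)`). -/
abbrev WebPoint (C A1 : Type*) := A1 ⊕ C × ℕ

/-- `webPt γ σ k` is the particle `σ(k)`; `σ(0)` is the attachment point `γ σ ∈ A1`. -/
def webPt {C A1 : Type*} (γ : C → A1) (σ : C) : ℕ → WebPoint C A1
  | 0 => Sum.inl (γ σ)
  | k + 1 => Sum.inr (σ, k)

/-- `ξ` satisfies the eigenvalue equation `Lξ = λξ` (rows of `L` have finite support,
so the `finsum` is a genuine finite sum). -/
def IsWebEigen {C A1 : Type*} (L : WebPoint C A1 → WebPoint C A1 → ℝ) (lam : ℂ)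
    (ξ : WebPoint C A1 → ℂ) : Prop :=
  ∀ α, ∑ᶠ β, (L α β : ℂ) * ξ β = lam * ξ α

theorem web_eigenfunction_vanishing
    {C A1 : Type*} [Fintype C] [Nonempty C] [Fintype A1]
    (γ : C → A1) (hγ : Function.Injective γ)
    (𝔞 𝔟 : C → ℕ → ℝ) (h𝔟 : ∀ σ k, 0 < 𝔟 σ k)
    (L : WebPoint C A1 → WebPoint C A1 → ℝ)
    (hsym : ∀ α β, L α β = L β α)
    (hdiag : ∀ σ k, L (webPt γ σ (k + 1)) (webPt γ σ (k + 1)) = 𝔞 σ (k + 1))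
    (hoff : ∀ σ k, L (webPt γ σ k) (webPt γ σ (k + 1)) = -(𝔟 σ k))
    (hzero : ∀ σ (k : ℕ) (β : WebPoint C A1), β ≠ webPt γ σ k → β ≠ webPt γ σ (k + 1) →
      β ≠ webPt γ σ (k + 2) → L (webPt γ σ (k + 1)) β = 0)
    (lam : ℝ) (ξ : WebPoint C A1 → ℂ) (hξ : IsWebEigen L (lam : ℂ) ξ)
    (x : C → ℂ) (e : C → ℕ → ℂ) (c : C → ℝ) (hc : ∀ σ, 0 ≤ c σ)
    (hfact : ∀ σ (k : ℕ), ξ (webPt γ σ k) = x σ * e σ k)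
    (hWr : ∀ σ : C, (𝔟 σ 0 : ℂ) *
      (e σ 0 * (starRingEnd ℂ) (e σ 1) - e σ 1 * (starRingEnd ℂ) (e σ 0))
        = Complex.I * (c σ : ℂ)) :
    (∀ σ : C, c σ * ‖x σ‖ ^ 2 = 0) ∧
    (∀ σ : C, 0 < c σ → x σ = 0) := by
  classical
  -- Row expansion of the eigenvalue equation at central points.
  have row : ∀ a : A1, (lam : ℂ) * ξ (Sum.inl a)
      = (∑ b : A1, (L (Sum.inl a) (Sum.inl b) : ℂ) * ξ (Sum.inl b))
        + ∑ σ : C, (L (Sum.inl a) (Sum.inr (σ, 0)) : ℂ) * ξ (Sum.inr (σ, 0)) := by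
    intro a
    rw [← hξ (Sum.inl a)]
    have hsub : (Function.support fun β => (L (Sum.inl a) β : ℂ) * ξ β) ⊆
        ((Finset.univ : Finset A1).disjSum
          ((Finset.univ : Finset C).image fun σ => (σ, 0)) : Finset (WebPoint C A1)) := by
      intro β hβ
      simp only [Function.mem_support] at hβ
      rcases β with b | ⟨σ, m⟩
      · simp
      · rcases m with _ | m
        · simp
        · exfalso
          apply hβ
          have h0 : L (Sum.inl a) (Sum.inr (σ, m + 1)) = 0 := by
            rw [hsym]
            exact hzero σ (m + 1) (Sum.inl a) (by simp [webPt]) (by simp [webPt])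
              (by simp [webPt])
          rw [h0]
          simp
    rw [finsum_eq_finset_sum_of_support_subset _ hsub, Finset.sum_disjSum,
      Finset.sum_image (by intro u _ v _ h; simpa using h)]
  -- The quadratic form pieces.
  set Q : ℂ := ∑ a : A1, ∑ b : A1,
      (starRingEnd ℂ) (ξ (Sum.inl a)) * ((L (Sum.inl a) (Sum.inl b) : ℂ) * ξ (Sum.inl b))
    with hQdef
  set T : ℂ := ∑ a : A1, ∑ σ : C,
      (starRingEnd ℂ) (ξ (Sum.inl a)) * ((L (Sum.inl a) (Sum.inr (σ, 0)) : ℂ) * ξ (Sum.inr (σ, 0)))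
    with hTdef
  set S : ℂ := ∑ a : A1, (starRingEnd ℂ) (ξ (Sum.inl a)) * ((lam : ℂ) * ξ (Sum.inl a))
    with hSdef
  have hSQT : S = Q + T := by
    rw [hSdef, hQdef, hTdef, ← Finset.sum_add_distrib]
    refine Finset.sum_congr rfl fun a _ => ?_
    rw [row a, mul_add, Finset.mul_sum, Finset.mul_sum]
  have hSreal : (starRingEnd ℂ) S = S := by
    rw [hSdef, map_sum]
    refine Finset.sum_congr rfl fun a _ => ?_
    simp only [map_mul, Complex.conj_conj, Complex.conj_ofReal]
    ring
  have hQreal : (starRingEnd ℂ) Q = Q := by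
    rw [hQdef, map_sum]
    simp only [map_sum, map_mul, Complex.conj_conj, Complex.conj_ofReal]
    rw [Finset.sum_comm]
    refine Finset.sum_congr rfl fun a _ => Finset.sum_congr rfl fun b _ => ?_
    rw [hsym (Sum.inl b) (Sum.inl a)]
    ring
  have hTreal : (starRingEnd ℂ) T = T := by
    have := hSQT
    have h2 : (starRingEnd ℂ) S = (starRingEnd ℂ) Q + (starRingEnd ℂ) T := by
      rw [this, map_add]
    rw [hSreal, hQreal, this] at h2
    linear_combination -h2
  -- Reduce T to a sum over channels.
  have hT : T = ∑ σ : C,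
      (starRingEnd ℂ) (ξ (Sum.inl (γ σ))) * (((-(𝔟 σ 0) : ℝ) : ℂ) * ξ (Sum.inr (σ, 0))) := by
    rw [hTdef, Finset.sum_comm]
    refine Finset.sum_congr rfl fun σ _ => ?_
    rw [Finset.sum_eq_single (γ σ)]
    · rw [show L (Sum.inl (γ σ)) (Sum.inr (σ, 0)) = -(𝔟 σ 0) from hoff σ 0]
    · intro a _ ha
      have h0 : L (Sum.inl a) (Sum.inr (σ, 0)) = 0 := by
        rw [hsym]
        exact hzero σ 0 (Sum.inl a) (by simp [webPt, ha]) (by simp [webPt]) (by simp [webPt])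
      rw [h0]
      simp
    · intro h
      exact absurd (Finset.mem_univ (γ σ)) h
  -- The key identity: the total flux vanishes.
  have key : ∑ σ : C, Complex.I * ((c σ : ℂ) * (Complex.normSq (x σ) : ℂ)) = 0 := by
    have h0 : T - (starRingEnd ℂ) T = 0 := by rw [hTreal]; ring
    rw [← h0, hT, map_sum, ← Finset.sum_sub_distrib]
    refine Finset.sum_congr rfl fun σ _ => ?_
    have e0 : ξ (Sum.inl (γ σ)) = x σ * e σ 0 := hfact σ 0
    have e1 : ξ (Sum.inr (σ, 0)) = x σ * e σ 1 := hfact σ 1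
    rw [e0, e1]
    have hw := hWr σ
    have hns : (Complex.normSq (x σ) : ℂ) = x σ * (starRingEnd ℂ) (x σ) :=
      (Complex.mul_conj (x σ)).symm
    simp only [map_mul, Complex.conj_conj, Complex.conj_ofReal]
    rw [hns]
    push_cast
    linear_combination (-(x σ * (starRingEnd ℂ) (x σ))) * hw
  -- Extract the real statement.
  have key2 : ∑ σ : C, c σ * Complex.normSq (x σ) = 0 := by
    have h1 : Complex.I * ∑ σ : C, ((c σ : ℂ) * (Complex.normSq (x σ) : ℂ)) = 0 := by
      rw [Finset.mul_sum]
      exact key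
    have h2 : ∑ σ : C, ((c σ : ℂ) * (Complex.normSq (x σ) : ℂ)) = 0 :=
      (mul_eq_zero.mp h1).resolve_left Complex.I_ne_zero
    exact_mod_cast h2
  have hterm : ∀ σ : C, c σ * Complex.normSq (x σ) = 0 := by
    intro σ
    have hnn : ∀ σ ∈ (Finset.univ : Finset C), 0 ≤ c σ * Complex.normSq (x σ) :=
      fun σ _ => mul_nonneg (hc σ) (Complex.normSq_nonneg _)
    exact (Finset.sum_eq_zero_iff_of_nonneg hnn).mp key2 σ (Finset.mem_univ σ)
  constructor
  · intro σ
    rw [Complex.sq_norm]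
    exact hterm σ
  · intro σ hσ
    have := hterm σ
    have hns : Complex.normSq (x σ) = 0 := by
      rcases mul_eq_zero.mp this with h | h
      · exact absurd h (ne_of_gt hσ)
      · exact h
    exact Complex.normSq_eq_zero.mp hns
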